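/- arXiv:1209.1695 — 3 statements merged into one kernel-verified Lean document; each statement's English description precedes it below -/
import Mathlib

section
/- In the static two-controller team problem, for every pair of control strategies (g¹,g²) with gⁱ : 𝒴* × 𝒴ⁱ → 𝒰ⁱ, there exists a coordination strategy d : 𝒴* → F(𝒴¹,𝒰¹) × F(𝒴²,𝒰²) such that the expected cost E[l(X, U¹, U²)] under the coordinated system (where Uⁱ = (d(Y*))ⁱ(Yⁱ)) equals the expected cost under (g¹,g²) (where Uⁱ = gⁱ(Y*,Yⁱ)); and conversely, for every coordination strategy d there exist (g¹,g²) achieving the same expected cost. Consequently the infimum of expected cost over control strategy pairs equals the infimum over coordination strategies. -/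
open Finset

/-- In the static two-controller team problem, control strategies and
coordination strategies are cost-equivalent, and the infima of expected cost coincide. -/
theorem static_team_coordinator_equivalence
    (X Ys Y1 Y2 U1 U2 : Type)
    [Fintype X] [Fintype Ys] [Fintype Y1] [Fintype Y2] [Fintype U1] [Fintype U2]
    [Nonempty U1] [Nonempty U2]
    (q : X × Ys × Y1 × Y2 → ℝ) (hq : ∀ v, 0 ≤ q v) (hq1 : ∑ v, q v = 1)
    (l : X → U1 → U2 → ℝ)
    (Jg : ((Ys → Y1 → U1) × (Ys → Y2 → U2)) → ℝ)
    (hJg : ∀ g, Jg g = ∑ v : X × Ys × Y1 × Y2,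
      q v * l v.1 (g.1 v.2.1 v.2.2.1) (g.2 v.2.1 v.2.2.2))
    (Jd : (Ys → (Y1 → U1) × (Y2 → U2)) → ℝ)
    (hJd : ∀ d, Jd d = ∑ v : X × Ys × Y1 × Y2,
      q v * l v.1 ((d v.2.1).1 v.2.2.1) ((d v.2.1).2 v.2.2.2)) :
    (∀ g, ∃ d, Jd d = Jg g) ∧ (∀ d, ∃ g, Jg g = Jd d) ∧
      (⨅ g : (Ys → Y1 → U1) × (Ys → Y2 → U2), Jg g) =
        ⨅ d : Ys → (Y1 → U1) × (Y2 → U2), Jd d := by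
  have key : ∀ g : (Ys → Y1 → U1) × (Ys → Y2 → U2),
      Jd (fun ys => (g.1 ys, g.2 ys)) = Jg g := by
    intro g; rw [hJd, hJg]
  refine ⟨fun g => ⟨fun ys => (g.1 ys, g.2 ys), key g⟩,
    fun d => ⟨(fun ys => (d ys).1, fun ys => (d ys).2), ?_⟩, ?_⟩
  · rw [hJd, hJg]
  · have hr : Set.range Jg = Set.range Jd := by
      ext r
      constructor
      · rintro ⟨g, rfl⟩; exact ⟨fun ys => (g.1 ys, g.2 ys), key g⟩
      · rintro ⟨d, rfl⟩
        refine ⟨(fun ys => (d ys).1, fun ys => (d ys).2), ?_⟩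
        rw [hJd, hJg]
    simp only [iInf, hr]
end

section
/- In the partial history sharing model, control strategies and coordination strategies are equivalent: (a) given any control strategy 𝐠 = (gᵢₜ) with Uᵢₜ = gᵢₜ(Yᵢₜ, Mᵢₜ, Cₜ), the coordination strategy defined by dₜ(Cₜ) = (g¹ₜ(·,·,Cₜ), …, gⁿₜ(·,·,Cₜ)) induces the same joint distribution of (X_{1:T}, 𝐔_{1:T}) and hence the same expected total cost; (b) conversely, given any coordination strategy 𝐝 with 𝚪ₜ = dₜ(Cₜ, 𝚪_{1:t-1}), the control strategy obtained by recursively substituting past prescriptions (so that gᵢₜ(·,·,cₜ) = dᵢₜ(cₜ, γ_{1:t-1}(cₜ)) where γ_{1:t-1}(cₜ) are the prescriptions determined by 𝐝 and the prefix of cₜ) induces the same joint distribution of (X_{1:T}, 𝐔_{1:T}) and the same expected total cost. -/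
open Finset

open Classical in
/-- Probability of an event under a pmf on a finite sample space. -/
noncomputable def prOf {Ω : Type} [Fintype Ω] (p : Ω → ℝ) (A : Ω → Prop) : ℝ :=
  ∑ ω, if A ω then p ω else 0

/-- The partial history sharing model: dynamics, observations, memory-update and
shared-memory (protocol) functions, initial memories, and instantaneous cost. -/
structure PHSModel (n : ℕ) where
  𝒳 : Type
  𝒲0 : Type
  𝒴 : Fin n → Type
  𝒰 : Fin n → Type
  ℳ : Fin n → Type
  𝒵 : Fin n → Type
  𝒲 : Fin n → Type
  f : ℕ → 𝒳 → (∀ i, 𝒰 i) → 𝒲0 → 𝒳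
  h : (i : Fin n) → ℕ → 𝒳 → 𝒲 i → 𝒴 i
  phi : (i : Fin n) → ℕ → ℳ i → 𝒴 i → 𝒰 i → 𝒵 i
  lam : (i : Fin n) → ℕ → ℳ i → 𝒴 i → 𝒰 i → ℳ i
  m0 : ∀ i, ℳ i
  l : ℕ → 𝒳 → (∀ i, 𝒰 i) → ℝ

namespace PHSModel

variable {n : ℕ} (M : PHSModel n)

/-- A control strategy: controller i maps (current observation, local memory,
shared memory) to its action. -/
abbrev Ctrl := (i : Fin n) → (t : ℕ) → M.𝒴 i → M.ℳ i → (Fin t → ∀ j, M.𝒵 j) → M.𝒰 i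

/-- A prescription tuple: for each controller a map from (observation, local memory)
to action. -/
abbrev Pres := ∀ i, M.𝒴 i → M.ℳ i → M.𝒰 i

/-- A coordination strategy: maps (shared memory, past prescriptions) to current
prescriptions. -/
abbrev Coord := (t : ℕ) → (Fin t → ∀ j, M.𝒵 j) → (Fin t → M.Pres) → M.Pres

/-- A realization of the primitive random variables. -/
abbrev Prim := M.𝒳 × (ℕ → M.𝒲0) × ((i : Fin n) → ℕ → M.𝒲 i)

/-- Trajectory (state, local memories, shared memory) under a control strategy. -/
def traj (g : M.Ctrl) (ρ : M.Prim) : (t : ℕ) → M.𝒳 × (∀ i, M.ℳ i) × (Fin t → ∀ j, M.𝒵 j)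
  | 0 => (ρ.1, M.m0, fun i => i.elim0)
  | t + 1 =>
    let s : M.𝒳 × (∀ i, M.ℳ i) × (Fin t → ∀ j, M.𝒵 j) := traj g ρ t
    let y : ∀ i, M.𝒴 i := fun i => M.h i t s.1 (ρ.2.2 i t)
    let u : ∀ i, M.𝒰 i := fun i => g i t (y i) (s.2.1 i) s.2.2
    let z : ∀ j, M.𝒵 j := fun i => M.phi i t (s.2.1 i) (y i) (u i)
    (M.f t s.1 u (ρ.2.1 t), fun i => M.lam i t (s.2.1 i) (y i) (u i), Fin.snoc s.2.2 z)

def Xg (g : M.Ctrl) (ρ : M.Prim) (t : ℕ) : M.𝒳 := (M.traj g ρ t).1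
def Mg (g : M.Ctrl) (ρ : M.Prim) (t : ℕ) : ∀ i, M.ℳ i := (M.traj g ρ t).2.1
def Cg (g : M.Ctrl) (ρ : M.Prim) (t : ℕ) : Fin t → ∀ j, M.𝒵 j := (M.traj g ρ t).2.2
def Yg (g : M.Ctrl) (ρ : M.Prim) (t : ℕ) : ∀ i, M.𝒴 i :=
  fun i => M.h i t (M.Xg g ρ t) (ρ.2.2 i t)
def Ug (g : M.Ctrl) (ρ : M.Prim) (t : ℕ) : ∀ i, M.𝒰 i :=
  fun i => g i t (M.Yg g ρ t i) (M.Mg g ρ t i) (M.Cg g ρ t)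

/-- Trajectory (state, local memories, shared memory, prescription history) in the
coordinated system under a coordination strategy. -/
def ctraj (dc : M.Coord) (ρ : M.Prim) :
    (t : ℕ) → M.𝒳 × (∀ i, M.ℳ i) × (Fin t → ∀ j, M.𝒵 j) × (Fin t → M.Pres)
  | 0 => (ρ.1, M.m0, fun i => i.elim0, fun i => i.elim0)
  | t + 1 =>
    let s : M.𝒳 × (∀ i, M.ℳ i) × (Fin t → ∀ j, M.𝒵 j) × (Fin t → M.Pres) :=
      ctraj dc ρ t
    let γ : M.Pres := dc t s.2.2.1 s.2.2.2
    let y : ∀ i, M.𝒴 i := fun i => M.h i t s.1 (ρ.2.2 i t)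
    let u : ∀ i, M.𝒰 i := fun i => γ i (y i) (s.2.1 i)
    let z : ∀ j, M.𝒵 j := fun i => M.phi i t (s.2.1 i) (y i) (u i)
    (M.f t s.1 u (ρ.2.1 t), fun i => M.lam i t (s.2.1 i) (y i) (u i),
      Fin.snoc s.2.2.1 z, Fin.snoc s.2.2.2 γ)

def cX (dc : M.Coord) (ρ : M.Prim) (t : ℕ) : M.𝒳 := (M.ctraj dc ρ t).1
def cM (dc : M.Coord) (ρ : M.Prim) (t : ℕ) : ∀ i, M.ℳ i := (M.ctraj dc ρ t).2.1
def cGam (dc : M.Coord) (ρ : M.Prim) (t : ℕ) : M.Pres :=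
  dc t (M.ctraj dc ρ t).2.2.1 (M.ctraj dc ρ t).2.2.2
def cY (dc : M.Coord) (ρ : M.Prim) (t : ℕ) : ∀ i, M.𝒴 i :=
  fun i => M.h i t (M.cX dc ρ t) (ρ.2.2 i t)
def cU (dc : M.Coord) (ρ : M.Prim) (t : ℕ) : ∀ i, M.𝒰 i :=
  fun i => M.cGam dc ρ t i (M.cY dc ρ t i) (M.cM dc ρ t i)

end PHSModel

namespace PHSModel

variable {n : ℕ} (M : PHSModel n)

/-- Coordination strategy induced by a control strategy. -/
def coordOf (g : M.Ctrl) : M.Coord :=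
  fun t c _ => fun i y m => g i t y m c

lemma coordOf_traj (g : M.Ctrl) (ρ : M.Prim) (t : ℕ) :
    (M.ctraj (M.coordOf g) ρ t).1 = (M.traj g ρ t).1 ∧
    (M.ctraj (M.coordOf g) ρ t).2.1 = (M.traj g ρ t).2.1 ∧
    (M.ctraj (M.coordOf g) ρ t).2.2.1 = (M.traj g ρ t).2.2 := by
  induction t with
  | zero => exact ⟨rfl, rfl, rfl⟩
  | succ t ih =>
    obtain ⟨h1, h2, h3⟩ := ih
    simp only [ctraj, traj, coordOf, h1, h2, h3]
    exact ⟨trivial, trivial, trivial⟩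

lemma coordOf_X (g : M.Ctrl) (ρ : M.Prim) (t : ℕ) :
    M.cX (M.coordOf g) ρ t = M.Xg g ρ t := (M.coordOf_traj g ρ t).1

lemma coordOf_U (g : M.Ctrl) (ρ : M.Prim) (t : ℕ) :
    M.cU (M.coordOf g) ρ t = M.Ug g ρ t := by
  obtain ⟨h1, h2, h3⟩ := M.coordOf_traj g ρ t
  funext i
  simp only [cU, Ug, cGam, cY, Yg, cX, Xg, cM, Mg, Cg, coordOf, h1, h2, h3]

/-- Prescription history determined by a coordination strategy and shared memory. -/
def gamHist (dc : M.Coord) : (t : ℕ) → (Fin t → ∀ j, M.𝒵 j) → Fin t → M.Pres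
  | 0, _ => fun i => i.elim0
  | t + 1, c =>
    Fin.snoc (gamHist dc t (Fin.init c))
      (dc t (Fin.init c) (gamHist dc t (Fin.init c)))

/-- Control strategy induced by a coordination strategy. -/
def ctrlOf (dc : M.Coord) : M.Ctrl :=
  fun i t y m c => dc t c (M.gamHist dc t c) i y m

lemma ctrlOf_traj (dc : M.Coord) (ρ : M.Prim) (t : ℕ) :
    (M.ctraj dc ρ t).1 = (M.traj (M.ctrlOf dc) ρ t).1 ∧
    (M.ctraj dc ρ t).2.1 = (M.traj (M.ctrlOf dc) ρ t).2.1 ∧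
    (M.ctraj dc ρ t).2.2.1 = (M.traj (M.ctrlOf dc) ρ t).2.2 ∧
    (M.ctraj dc ρ t).2.2.2 = M.gamHist dc t (M.traj (M.ctrlOf dc) ρ t).2.2 := by
  induction t with
  | zero =>
    refine ⟨rfl, rfl, rfl, ?_⟩
    funext i; exact i.elim0
  | succ t ih =>
    obtain ⟨h1, h2, h3, h4⟩ := ih
    simp only [ctraj, traj, ctrlOf, h1, h2, h3, h4, gamHist, Fin.init_snoc]
    exact ⟨trivial, trivial, trivial, trivial⟩

lemma ctrlOf_X (dc : M.Coord) (ρ : M.Prim) (t : ℕ) :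
    M.Xg (M.ctrlOf dc) ρ t = M.cX dc ρ t := (M.ctrlOf_traj dc ρ t).1.symm

lemma ctrlOf_U (dc : M.Coord) (ρ : M.Prim) (t : ℕ) :
    M.Ug (M.ctrlOf dc) ρ t = M.cU dc ρ t := by
  obtain ⟨h1, h2, h3, h4⟩ := M.ctrlOf_traj dc ρ t
  funext i
  simp only [cU, Ug, cGam, cY, Yg, cX, Xg, cM, Mg, Cg, ctrlOf, h1, h2, h3, h4]

end PHSModel

/-- Proposition 3: control strategies of the partial history sharing
model and coordination strategies of the coordinated system are equivalent: each
induces the same joint distribution of (X_{1:T}, 𝐔_{1:T}) and the same expected total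
cost as some strategy of the other kind. -/
theorem phs_coordinator_equivalence
    (n : ℕ) (M : PHSModel n) (T : ℕ)
    (Ω : Type) [Fintype Ω] (p : Ω → ℝ) (hp : ∀ ω, 0 ≤ p ω) (hp1 : ∑ ω, p ω = 1)
    (prim : Ω → M.Prim)
    (J : M.Ctrl → ℝ)
    (hJ : ∀ g, J g = ∑ ω, p ω * ∑ t : Fin T,
      M.l t (M.Xg g (prim ω) t) (M.Ug g (prim ω) t))
    (Jc : M.Coord → ℝ)
    (hJc : ∀ dc, Jc dc = ∑ ω, p ω * ∑ t : Fin T,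
      M.l t (M.cX dc (prim ω) t) (M.cU dc (prim ω) t)) :
    (∀ g : M.Ctrl, ∃ dc : M.Coord,
      (∀ (xv : Fin T → M.𝒳) (uv : (t : Fin T) → ∀ i, M.𝒰 i),
        prOf p (fun ω => ∀ t : Fin T,
            M.cX dc (prim ω) t = xv t ∧ M.cU dc (prim ω) t = uv t) =
          prOf p (fun ω => ∀ t : Fin T,
            M.Xg g (prim ω) t = xv t ∧ M.Ug g (prim ω) t = uv t)) ∧
        Jc dc = J g) ∧
    (∀ dc : M.Coord, ∃ g : M.Ctrl,
      (∀ (xv : Fin T → M.𝒳) (uv : (t : Fin T) → ∀ i, M.𝒰 i),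
        prOf p (fun ω => ∀ t : Fin T,
            M.Xg g (prim ω) t = xv t ∧ M.Ug g (prim ω) t = uv t) =
          prOf p (fun ω => ∀ t : Fin T,
            M.cX dc (prim ω) t = xv t ∧ M.cU dc (prim ω) t = uv t)) ∧
        J g = Jc dc) := by
  constructor
  · intro g
    refine ⟨M.coordOf g, ?_, ?_⟩
    · intro xv uv
      unfold prOf
      apply Finset.sum_congr rfl
      intro ω _
      have hiff : (∀ t : Fin T,
          M.cX (M.coordOf g) (prim ω) t = xv t ∧ M.cU (M.coordOf g) (prim ω) t = uv t) ↔
          (∀ t : Fin T, M.Xg g (prim ω) t = xv t ∧ M.Ug g (prim ω) t = uv t) := by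
        constructor <;> intro h t <;>
          simpa only [M.coordOf_X, M.coordOf_U] using h t
      by_cases hA : ∀ t : Fin T,
          M.cX (M.coordOf g) (prim ω) t = xv t ∧ M.cU (M.coordOf g) (prim ω) t = uv t
      · rw [if_pos hA, if_pos (hiff.mp hA)]
      · rw [if_neg hA, if_neg (fun hB => hA (hiff.mpr hB))]
    · rw [hJc, hJ]
      apply Finset.sum_congr rfl
      intro ω _
      congr 1
      apply Finset.sum_congr rfl
      intro t _
      rw [M.coordOf_X, M.coordOf_U]
  · intro dc
    refine ⟨M.ctrlOf dc, ?_, ?_⟩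
    · intro xv uv
      unfold prOf
      apply Finset.sum_congr rfl
      intro ω _
      have hiff : (∀ t : Fin T,
          M.Xg (M.ctrlOf dc) (prim ω) t = xv t ∧ M.Ug (M.ctrlOf dc) (prim ω) t = uv t) ↔
          (∀ t : Fin T, M.cX dc (prim ω) t = xv t ∧ M.cU dc (prim ω) t = uv t) := by
        constructor <;> intro h t <;>
          simpa only [M.ctrlOf_X, M.ctrlOf_U] using h t
      by_cases hA : ∀ t : Fin T,
          M.Xg (M.ctrlOf dc) (prim ω) t = xv t ∧ M.Ug (M.ctrlOf dc) (prim ω) t = uv t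
      · rw [if_pos hA, if_pos (hiff.mp hA)]
      · rw [if_neg hA, if_neg (fun hB => hA (hiff.mpr hB))]
    · rw [hJc, hJ]
      apply Finset.sum_congr rfl
      intro ω _
      congr 1
      apply Finset.sum_congr rfl
      intro t _
      rw [M.ctrlOf_X, M.ctrlOf_U]
end

section
/- Alternative common information state: in the partial history sharing model, define Π^{new}ₜ(x, 𝐦) = P(Xₜ = x, 𝐌ₜ = 𝐦 | Cₜ). Then (i) Π^{new}ₜ = χₜ(Πₜ), where χₜ is marginalization over 𝐲: Π^{new}ₜ(x,𝐦) = Σ_𝐲 Πₜ(x,𝐲,𝐦); and (ii) Πₜ = ζₜ(Π^{new}ₜ), where ζₜ(π^{new})(x,𝐲,𝐦) = π^{new}(x,𝐦) · P(𝐘ₜ = 𝐲 | Xₜ = x), with P(𝐘ₜ = 𝐲 | Xₜ = x) = ∏ᵢ P(hᵢₜ(x, Wᵢₜ) = yⁱ) determined by the fixed observation-noise distributions and independent of the control strategy. Hence χₜ ∘ ζₜ = id and ζₜ ∘ χₜ(Πₜ) = Πₜ almost surely. -/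
open Finset

lemma prOf_congr {Ω : Type} [Fintype Ω] (p : Ω → ℝ) {A B : Ω → Prop}
    (hAB : ∀ ω, A ω ↔ B ω) : prOf p A = prOf p B := by
  unfold prOf
  refine Finset.sum_congr rfl fun ω _ => ?_
  by_cases hA : A ω
  · rw [if_pos hA, if_pos ((hAB ω).mp hA)]
  · rw [if_neg hA, if_neg (fun hb => hA ((hAB ω).mpr hb))]

lemma ite_sum {β : Type*} (P : Prop) [Decidable P] (s : Finset β) (f : β → ℝ) :
    (if P then ∑ x ∈ s, f x else 0) = ∑ x ∈ s, if P then f x else 0 := by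
  split <;> simp

open Classical in
lemma pr_fiber' {Ω α : Type} [Fintype Ω] [Fintype α] (p : Ω → ℝ) (g : Ω → α)
    (A : Ω → Prop) (Q : α → Prop) :
    prOf p (fun ω => A ω ∧ Q (g ω)) =
      ∑ a, if Q a then prOf p (fun ω => A ω ∧ g ω = a) else 0 := by
  unfold prOf
  beta_reduce
  simp only [ite_sum, ← ite_and]
  rw [Finset.sum_comm]
  refine Finset.sum_congr rfl fun ω _ => ?_
  rw [Finset.sum_eq_single (g ω)]
  · by_cases hA : A ω <;> by_cases hQ : Q (g ω) <;> simp [hA, hQ]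
  · intro b _ hb
    rw [if_neg]
    exact fun hc => hb (hc.2.2.symm ▸ rfl)
  · simp

open Classical in
lemma pr_fiber {Ω α : Type} [Fintype Ω] [Fintype α] (p : Ω → ℝ) (g : Ω → α)
    (Q : α → Prop) :
    prOf p (fun ω => Q (g ω)) = ∑ a, if Q a then prOf p (fun ω => g ω = a) else 0 := by
  have h1 := pr_fiber' p g (fun _ => True) Q
  have e1 : prOf p (fun ω => True ∧ Q (g ω)) = prOf p (fun ω => Q (g ω)) :=
    prOf_congr p fun ω => by tauto
  have e2 : ∀ a : α, prOf p (fun ω => True ∧ g ω = a) = prOf p (fun ω => g ω = a) :=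
    fun a => prOf_congr p fun ω => by tauto
  rw [e1] at h1
  rw [h1]
  exact Finset.sum_congr rfl fun a _ => by rw [e2 a]

lemma prod_ite_all {ι : Type*} [Fintype ι] (P : ι → Prop) [∀ i, Decidable (P i)]
    (f : ι → ℝ) :
    (∏ i, if P i then f i else 0) = if (∀ i, P i) then ∏ i, f i else 0 := by
  by_cases hall : ∀ i, P i
  · rw [if_pos hall]
    exact Finset.prod_congr rfl fun i _ => if_pos (hall i)
  · rw [if_neg hall]
    push_neg at hall
    obtain ⟨i, hi⟩ := hall
    exact Finset.prod_eq_zero (Finset.mem_univ i) (if_neg hi)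

open Classical in
lemma pr_total {Ω α : Type} [Fintype Ω] [Fintype α] (p : Ω → ℝ) (g : Ω → α)
    (A : Ω → Prop) :
    prOf p A = ∑ a, prOf p (fun ω => A ω ∧ g ω = a) := by
  unfold prOf
  rw [Finset.sum_comm]
  refine Finset.sum_congr rfl fun ω _ => ?_
  rw [Finset.sum_eq_single (g ω)]
  · by_cases hA : A ω <;> simp [hA]
  · intro b _ hb
    rw [if_neg]
    exact fun hc => hb (hc.2.symm ▸ rfl)
  · simp

/-- Lemma 2 / Theorem 4, alternative common information state:
with Yᵢ = hᵢ(X, Wᵢ) and the observation noises (W¹,…,Wⁿ) mutually independent and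
independent of (X, 𝐌, C), the common information state Π = P(X,𝐘,𝐌 | C) and the
reduced state Π^new = P(X,𝐌 | C) determine each other: Π^new is the 𝐲-marginal of Π,
and Π(x,𝐲,𝐦) = Π^new(x,𝐦) · ∏ᵢ P(hᵢ(x,Wᵢ) = yᵢ), the latter factor being fixed by the
observation-noise distributions (independent of the control strategy). -/
theorem alternative_common_information_state
    (Ω 𝒳 𝒞 : Type) (n : ℕ) (𝒴 𝒲 ℳ : Fin n → Type)
    [Fintype Ω] [Fintype 𝒳] [Fintype 𝒞] [∀ i, Fintype (𝒴 i)] [∀ i, Fintype (𝒲 i)]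
    [∀ i, Fintype (ℳ i)]
    (p : Ω → ℝ) (hp : ∀ ω, 0 ≤ p ω) (hp1 : ∑ ω, p ω = 1)
    (X : Ω → 𝒳) (W : ∀ i, Ω → 𝒲 i) (h : ∀ i, 𝒳 → 𝒲 i → 𝒴 i)
    (Y : ∀ i, Ω → 𝒴 i) (hY : ∀ i ω, Y i ω = h i (X ω) (W i ω))
    (Mem : Ω → ∀ i, ℳ i) (C : Ω → 𝒞)
    (hindep : ∀ (x : 𝒳) (m : ∀ i, ℳ i) (c : 𝒞) (w : ∀ i, 𝒲 i),
      prOf p (fun ω => X ω = x ∧ Mem ω = m ∧ C ω = c ∧ ∀ i, W i ω = w i) =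
        prOf p (fun ω => X ω = x ∧ Mem ω = m ∧ C ω = c) *
          ∏ i, prOf p (fun ω => W i ω = w i)) :
    ∀ c : 𝒞, 0 < prOf p (fun ω => C ω = c) →
      (∀ (x : 𝒳) (m : ∀ i, ℳ i),
        prOf p (fun ω => X ω = x ∧ Mem ω = m ∧ C ω = c) / prOf p (fun ω => C ω = c) =
          ∑ y : ∀ i, 𝒴 i,
            prOf p (fun ω => X ω = x ∧ (∀ i, Y i ω = y i) ∧ Mem ω = m ∧ C ω = c) /
              prOf p (fun ω => C ω = c)) ∧
      (∀ (x : 𝒳) (y : ∀ i, 𝒴 i) (m : ∀ i, ℳ i),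
        prOf p (fun ω => X ω = x ∧ (∀ i, Y i ω = y i) ∧ Mem ω = m ∧ C ω = c) /
            prOf p (fun ω => C ω = c) =
          (prOf p (fun ω => X ω = x ∧ Mem ω = m ∧ C ω = c) /
              prOf p (fun ω => C ω = c)) *
            ∏ i, prOf p (fun ω => h i x (W i ω) = y i)) := by
  intro c hc
  constructor
  · -- Part (i): the reduced state is the y-marginal
    intro x m
    have key : prOf p (fun ω => X ω = x ∧ Mem ω = m ∧ C ω = c)
        = ∑ y : ∀ i, 𝒴 i,
            prOf p (fun ω => X ω = x ∧ (∀ i, Y i ω = y i) ∧ Mem ω = m ∧ C ω = c) := by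
      rw [pr_total p (fun ω i => Y i ω)
        (fun ω => X ω = x ∧ Mem ω = m ∧ C ω = c)]
      refine Finset.sum_congr rfl fun y _ => prOf_congr p fun ω => ?_
      simp only [funext_iff]
      tauto
    rw [key, Finset.sum_div]
  · -- Part (ii): factorization
    intro x y m
    classical
    have main : prOf p (fun ω => X ω = x ∧ (∀ i, Y i ω = y i) ∧ Mem ω = m ∧ C ω = c)
        = prOf p (fun ω => X ω = x ∧ Mem ω = m ∧ C ω = c) *
            ∏ i, prOf p (fun ω => h i x (W i ω) = y i) := by
      have stepA : prOf p (fun ω => X ω = x ∧ (∀ i, Y i ω = y i) ∧ Mem ω = m ∧ C ω = c)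
          = prOf p (fun ω => (X ω = x ∧ Mem ω = m ∧ C ω = c) ∧
              ∀ i, h i x ((fun i => W i ω) i) = y i) := by
        refine prOf_congr p fun ω => ?_
        constructor
        · rintro ⟨hx, hy, hm, hcc⟩
          exact ⟨⟨hx, hm, hcc⟩, fun i => by rw [← hx]; rw [← hY i ω]; exact hy i⟩
        · rintro ⟨⟨hx, hm, hcc⟩, hw⟩
          exact ⟨hx, fun i => by rw [hY i ω, hx]; exact hw i, hm, hcc⟩
      rw [stepA,
        pr_fiber' p (fun ω i => W i ω) (fun ω => X ω = x ∧ Mem ω = m ∧ C ω = c)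
          (fun w => ∀ i, h i x (w i) = y i)]
      have stepC : ∀ w : ∀ i, 𝒲 i,
          prOf p (fun ω => (X ω = x ∧ Mem ω = m ∧ C ω = c) ∧ (fun i => W i ω) = w)
            = prOf p (fun ω => X ω = x ∧ Mem ω = m ∧ C ω = c) *
                ∏ i, prOf p (fun ω => W i ω = w i) := by
        intro w
        rw [← hindep x m c w]
        refine prOf_congr p fun ω => ?_
        simp only [funext_iff]
        tauto
      calc
        _ = ∑ w : ∀ i, 𝒲 i, prOf p (fun ω => X ω = x ∧ Mem ω = m ∧ C ω = c) *
                (if (∀ i, h i x (w i) = y i) then ∏ i, prOf p (fun ω => W i ω = w i)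
                 else 0) := by
              refine Finset.sum_congr rfl fun w _ => ?_
              by_cases hw : ∀ i, h i x (w i) = y i
              · rw [if_pos hw, if_pos hw, stepC w]
              · rw [if_neg hw, if_neg hw, mul_zero]
        _ = prOf p (fun ω => X ω = x ∧ Mem ω = m ∧ C ω = c) *
              ∑ w : ∀ i, 𝒲 i, ∏ i,
                (if h i x (w i) = y i then prOf p (fun ω => W i ω = w i) else 0) := by
              rw [Finset.mul_sum]
              refine Finset.sum_congr rfl fun w _ => ?_
              congr 1
              by_cases hw : ∀ i, h i x (w i) = y i
              · rw [if_pos hw]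
                exact Finset.prod_congr rfl fun i _ => (if_pos (hw i)).symm
              · rw [if_neg hw]
                push_neg at hw
                obtain ⟨i, hi⟩ := hw
                refine ((Finset.prod_eq_zero (Finset.mem_univ i) ?_ :
                  (∏ j, if h j x (w j) = y j then prOf p (fun ω => W j ω = w j) else 0) = 0)).symm
                exact if_neg hi
        _ = prOf p (fun ω => X ω = x ∧ Mem ω = m ∧ C ω = c) *
              ∏ i, ∑ a : 𝒲 i,
                (if h i x a = y i then prOf p (fun ω => W i ω = a) else 0) := by
              rw [Fintype.prod_sum
                (fun i a => if h i x a = y i then prOf p (fun ω => W i ω = a) else 0)]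
        _ = prOf p (fun ω => X ω = x ∧ Mem ω = m ∧ C ω = c) *
              ∏ i, prOf p (fun ω => h i x (W i ω) = y i) := by
              congr 1
              refine Finset.prod_congr rfl fun i _ => ?_
              rw [← pr_fiber p (W i) (fun a => h i x a = y i)]
    rw [main, mul_div_right_comm]
end
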